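/- If σ̂ : Sym(3) → Sym(3) is strictly Hilbert-monotone in log V (i.e., ⟨σ̂(log V₁) - σ̂(log V₂), log V₁ - log V₂⟩ > 0 for all V₁ ≠ V₂ ∈ Sym⁺⁺(3)) and σ(V) = σ̂(log V) is an isotropic tensor function, then the Baker-Ericksen inequalities hold: for distinct eigenvalues λᵢ ≠ λⱼ of V with corresponding principal stresses σᵢ, σⱼ, one has (σᵢ - σⱼ)(λᵢ - λⱼ) > 0. -/
import Mathlib


open Matrix

/-- Orthonormality of the standard basis vectors. -/
lemma BE_orth (j k : Fin 3) :
    (Pi.single j (1:ℝ)) ⬝ᵥ Pi.single k 1 = if j = k then 1 else 0 := by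
  by_cases h : j = k <;> simp [dotProduct, Pi.single_apply, h, eq_comm]

/-- Spectral decomposition of a diagonal matrix in the standard basis. -/
lemma BE_basis_sum (c : Fin 3 → ℝ) :
    (∑ i, c i • Matrix.vecMulVec (Pi.single i (1:ℝ)) (Pi.single i 1)) = Matrix.diagonal c := by
  ext a b
  simp [Matrix.sum_apply, Matrix.vecMulVec_apply, Pi.single_apply, Matrix.diagonal_apply]
  by_cases h : a = b <;> simp [h, Finset.sum_ite_eq]

/-- Generic core of the Baker–Ericksen argument, parameterized by a suitable rotation `Q`
    exchanging the `i`-th and `j`-th axes. -/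
lemma BE_key
    (mlog : Matrix (Fin 3) (Fin 3) ℝ → Matrix (Fin 3) (Fin 3) ℝ)
    (hmlog : ∀ (V : Matrix (Fin 3) (Fin 3) ℝ) (u : Fin 3 → (Fin 3 → ℝ)) (μ : Fin 3 → ℝ),
      (∀ j k, u j ⬝ᵥ u k = if j = k then 1 else 0) → (∀ i, 0 < μ i) →
      V = ∑ i, μ i • Matrix.vecMulVec (u i) (u i) →
      mlog V = ∑ i, Real.log (μ i) • Matrix.vecMulVec (u i) (u i))
    (σh : Matrix (Fin 3) (Fin 3) ℝ → Matrix (Fin 3) (Fin 3) ℝ)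
    (hmono : ∀ V₁ V₂ : Matrix (Fin 3) (Fin 3) ℝ, V₁.PosDef → V₂.PosDef → V₁ ≠ V₂ →
      0 < Matrix.trace ((σh (mlog V₁) - σh (mlog V₂)) * (mlog V₁ - mlog V₂)ᵀ))
    (hiso : ∀ V : Matrix (Fin 3) (Fin 3) ℝ, V.PosDef →
      ∀ Q : Matrix (Fin 3) (Fin 3) ℝ, Qᵀ * Q = 1 → Q.det = 1 →
      σh (mlog (Q * V * Qᵀ)) = Q * σh (mlog V) * Qᵀ)
    (lam : Fin 3 → ℝ) (hlam : ∀ i, 0 < lam i) (i j : Fin 3) (hij : lam i ≠ lam j)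
    (hne : i ≠ j)
    (Q : Matrix (Fin 3) (Fin 3) ℝ) (hQ : Qᵀ * Q = 1) (hdet : Q.det = 1)
    (hQd : ∀ μ : Fin 3 → ℝ, Q * Matrix.diagonal μ * Qᵀ = Matrix.diagonal (μ ∘ Equiv.swap i j))
    (hQSi : ∀ S : Matrix (Fin 3) (Fin 3) ℝ, (Q * S * Qᵀ) i i = S j j)
    (hQSj : ∀ S : Matrix (Fin 3) (Fin 3) ℝ, (Q * S * Qᵀ) j j = S i i) :
    0 < (σh (mlog (Matrix.diagonal lam)) i i - σh (mlog (Matrix.diagonal lam)) j j)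
        * (lam i - lam j) := by
  have hmd : ∀ μ : Fin 3 → ℝ, (∀ a, 0 < μ a) →
      mlog (Matrix.diagonal μ) = Matrix.diagonal (fun a => Real.log (μ a)) := by
    intro μ hμ
    have := hmlog (Matrix.diagonal μ) (fun a => Pi.single a 1) μ BE_orth hμ (BE_basis_sum μ).symm
    rw [this, BE_basis_sum]
  set lam' : Fin 3 → ℝ := lam ∘ Equiv.swap i j with hlam'def
  have hlam' : ∀ a, 0 < lam' a := fun a => hlam _
  have hli : lam' i = lam j := by simp [hlam'def]
  have hlj : lam' j = lam i := by simp [hlam'def]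
  have hVne : Matrix.diagonal lam ≠ Matrix.diagonal lam' := by
    intro h
    have := congrFun (congrFun h i) i
    rw [Matrix.diagonal_apply_eq, Matrix.diagonal_apply_eq, hli] at this
    exact hij this
  have hpd : ∀ μ : Fin 3 → ℝ, (∀ a, 0 < μ a) → (Matrix.diagonal μ).PosDef :=
    fun μ hμ => Matrix.posDef_diagonal_iff.mpr hμ
  have hσ' : σh (mlog (Matrix.diagonal lam')) = Q * σh (mlog (Matrix.diagonal lam)) * Qᵀ := by
    rw [← hQd lam]
    exact hiso (Matrix.diagonal lam) (hpd lam hlam) Q hQ hdet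
  have hmono' := hmono (Matrix.diagonal lam) (Matrix.diagonal lam')
    (hpd lam hlam) (hpd lam' hlam') hVne
  set S := σh (mlog (Matrix.diagonal lam)) with hS
  rw [hσ', hmd lam hlam, hmd lam' hlam', Matrix.diagonal_sub, Matrix.diagonal_transpose]
    at hmono'
  set d : Fin 3 → ℝ := fun a => Real.log (lam a) - Real.log (lam' a) with hd
  have htr : Matrix.trace ((S - Q * S * Qᵀ) * Matrix.diagonal d)
      = ∑ a, (S - Q * S * Qᵀ) a a * d a := by
    simp [Matrix.trace, Matrix.diag, Matrix.mul_diagonal]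
  rw [htr] at hmono'
  have hzero : ∀ a ∈ Finset.univ, a ∉ ({i, j} : Finset (Fin 3)) →
      (S - Q * S * Qᵀ) a a * d a = 0 := by
    intro a _ ha
    simp only [Finset.mem_insert, Finset.mem_singleton, not_or] at ha
    have : d a = 0 := by
      simp [hd, hlam'def, Equiv.swap_apply_of_ne_of_ne ha.1 ha.2]
    rw [this, mul_zero]
  rw [← Finset.sum_subset (Finset.subset_univ ({i, j} : Finset (Fin 3))) hzero,
    Finset.sum_pair hne] at hmono'
  have hdi : d i = Real.log (lam i) - Real.log (lam j) := by simp [hd, hli]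
  have hdj : d j = Real.log (lam j) - Real.log (lam i) := by simp [hd, hlj]
  rw [Matrix.sub_apply, Matrix.sub_apply, hQSi, hQSj, hdi, hdj] at hmono'
  rcases lt_trichotomy (lam i) (lam j) with h | h | h
  · have hl : Real.log (lam i) < Real.log (lam j) := Real.log_lt_log (hlam i) h
    have hs : S i i - S j j < 0 := by nlinarith
    have : lam i - lam j < 0 := by linarith
    exact mul_pos_of_neg_of_neg hs this
  · exact absurd h hij
  · have hl : Real.log (lam j) < Real.log (lam i) := Real.log_lt_log (hlam j) h
    have hs : 0 < S i i - S j j := by nlinarith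
    have : 0 < lam i - lam j := by linarith
    exact mul_pos hs this

section Qmatrices

def BEQ01 : Matrix (Fin 3) (Fin 3) ℝ := !![0,1,0;1,0,0;0,0,-1]
def BEQ02 : Matrix (Fin 3) (Fin 3) ℝ := !![0,0,1;0,-1,0;1,0,0]
def BEQ12 : Matrix (Fin 3) (Fin 3) ℝ := !![-1,0,0;0,0,1;0,1,0]

lemma BEQ01_orth : BEQ01ᵀ * BEQ01 = 1 := by
  ext a b; fin_cases a <;> fin_cases b <;>
    simp [BEQ01, Matrix.mul_apply, Fin.sum_univ_three, Matrix.one_apply,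
      Matrix.transpose_apply, Matrix.vecHead, Matrix.vecTail]
lemma BEQ02_orth : BEQ02ᵀ * BEQ02 = 1 := by
  ext a b; fin_cases a <;> fin_cases b <;>
    simp [BEQ02, Matrix.mul_apply, Fin.sum_univ_three, Matrix.one_apply,
      Matrix.transpose_apply, Matrix.vecHead, Matrix.vecTail]
lemma BEQ12_orth : BEQ12ᵀ * BEQ12 = 1 := by
  ext a b; fin_cases a <;> fin_cases b <;>
    simp [BEQ12, Matrix.mul_apply, Fin.sum_univ_three, Matrix.one_apply,
      Matrix.transpose_apply, Matrix.vecHead, Matrix.vecTail]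

lemma BEQ01_det : BEQ01.det = 1 := by simp [BEQ01, Matrix.det_fin_three]
lemma BEQ02_det : BEQ02.det = 1 := by simp [BEQ02, Matrix.det_fin_three]
lemma BEQ12_det : BEQ12.det = 1 := by simp [BEQ12, Matrix.det_fin_three]

lemma BEQ01_diag (μ : Fin 3 → ℝ) :
    BEQ01 * Matrix.diagonal μ * BEQ01ᵀ = Matrix.diagonal (μ ∘ Equiv.swap 0 1) := by
  ext a b; fin_cases a <;> fin_cases b <;>
    simp [BEQ01, Matrix.mul_apply, Fin.sum_univ_three, Matrix.diagonal_apply,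
      Equiv.swap_apply_def, Matrix.transpose_apply, Matrix.vecHead, Matrix.vecTail,
      Matrix.vecMul, dotProduct]
lemma BEQ02_diag (μ : Fin 3 → ℝ) :
    BEQ02 * Matrix.diagonal μ * BEQ02ᵀ = Matrix.diagonal (μ ∘ Equiv.swap 0 2) := by
  ext a b; fin_cases a <;> fin_cases b <;>
    simp [BEQ02, Matrix.mul_apply, Fin.sum_univ_three, Matrix.diagonal_apply,
      Equiv.swap_apply_def, Matrix.transpose_apply, Matrix.vecHead, Matrix.vecTail,
      Matrix.vecMul, dotProduct]
lemma BEQ12_diag (μ : Fin 3 → ℝ) :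
    BEQ12 * Matrix.diagonal μ * BEQ12ᵀ = Matrix.diagonal (μ ∘ Equiv.swap 1 2) := by
  ext a b; fin_cases a <;> fin_cases b <;>
    simp [BEQ12, Matrix.mul_apply, Fin.sum_univ_three, Matrix.diagonal_apply,
      Equiv.swap_apply_def, Matrix.transpose_apply, Matrix.vecHead, Matrix.vecTail,
      Matrix.vecMul, dotProduct]

lemma BEQ01_S0 (S : Matrix (Fin 3) (Fin 3) ℝ) : (BEQ01 * S * BEQ01ᵀ) 0 0 = S 1 1 := by
  simp [BEQ01, Matrix.mul_apply, Fin.sum_univ_three, Matrix.transpose_apply,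
    Matrix.vecHead, Matrix.vecTail, Matrix.vecMul, dotProduct]
lemma BEQ01_S1 (S : Matrix (Fin 3) (Fin 3) ℝ) : (BEQ01 * S * BEQ01ᵀ) 1 1 = S 0 0 := by
  simp [BEQ01, Matrix.mul_apply, Fin.sum_univ_three, Matrix.transpose_apply,
    Matrix.vecHead, Matrix.vecTail, Matrix.vecMul, dotProduct]
lemma BEQ02_S0 (S : Matrix (Fin 3) (Fin 3) ℝ) : (BEQ02 * S * BEQ02ᵀ) 0 0 = S 2 2 := by
  simp [BEQ02, Matrix.mul_apply, Fin.sum_univ_three, Matrix.transpose_apply,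
    Matrix.vecHead, Matrix.vecTail, Matrix.vecMul, dotProduct]
lemma BEQ02_S2 (S : Matrix (Fin 3) (Fin 3) ℝ) : (BEQ02 * S * BEQ02ᵀ) 2 2 = S 0 0 := by
  simp [BEQ02, Matrix.mul_apply, Fin.sum_univ_three, Matrix.transpose_apply,
    Matrix.vecHead, Matrix.vecTail, Matrix.vecMul, dotProduct]
lemma BEQ12_S1 (S : Matrix (Fin 3) (Fin 3) ℝ) : (BEQ12 * S * BEQ12ᵀ) 1 1 = S 2 2 := by
  simp [BEQ12, Matrix.mul_apply, Fin.sum_univ_three, Matrix.transpose_apply,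
    Matrix.vecHead, Matrix.vecTail, Matrix.vecMul, dotProduct]
lemma BEQ12_S2 (S : Matrix (Fin 3) (Fin 3) ℝ) : (BEQ12 * S * BEQ12ᵀ) 2 2 = S 1 1 := by
  simp [BEQ12, Matrix.mul_apply, Fin.sum_univ_three, Matrix.transpose_apply,
    Matrix.vecHead, Matrix.vecTail, Matrix.vecMul, dotProduct]

end Qmatrices

/-- If `σ̂` is strictly Hilbert-monotone in `log V` and `V ↦ σ̂(log V)` is isotropic, then
the Baker-Ericksen inequalities hold: `(σᵢ - σⱼ)(λᵢ - λⱼ) > 0` for distinct eigenvalues. -/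
theorem monotone_log_implies_baker_ericksen
    (mlog : Matrix (Fin 3) (Fin 3) ℝ → Matrix (Fin 3) (Fin 3) ℝ)
    (hmlog : ∀ (V : Matrix (Fin 3) (Fin 3) ℝ) (u : Fin 3 → (Fin 3 → ℝ)) (μ : Fin 3 → ℝ),
      (∀ j k, u j ⬝ᵥ u k = if j = k then 1 else 0) → (∀ i, 0 < μ i) →
      V = ∑ i, μ i • Matrix.vecMulVec (u i) (u i) →
      mlog V = ∑ i, Real.log (μ i) • Matrix.vecMulVec (u i) (u i))
    (σh : Matrix (Fin 3) (Fin 3) ℝ → Matrix (Fin 3) (Fin 3) ℝ)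
    (hmono : ∀ V₁ V₂ : Matrix (Fin 3) (Fin 3) ℝ, V₁.PosDef → V₂.PosDef → V₁ ≠ V₂ →
      0 < Matrix.trace ((σh (mlog V₁) - σh (mlog V₂)) * (mlog V₁ - mlog V₂)ᵀ))
    (hiso : ∀ V : Matrix (Fin 3) (Fin 3) ℝ, V.PosDef →
      ∀ Q : Matrix (Fin 3) (Fin 3) ℝ, Qᵀ * Q = 1 → Q.det = 1 →
      σh (mlog (Q * V * Qᵀ)) = Q * σh (mlog V) * Qᵀ)
    (lam : Fin 3 → ℝ) (hlam : ∀ i, 0 < lam i) (i j : Fin 3) (hij : lam i ≠ lam j) :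
    0 < (σh (mlog (Matrix.diagonal lam)) i i - σh (mlog (Matrix.diagonal lam)) j j)
        * (lam i - lam j) := by
  have hne : i ≠ j := fun h => hij (by rw [h])
  fin_cases i <;> fin_cases j
  · exact absurd rfl hne
  · exact BE_key mlog hmlog σh hmono hiso lam hlam 0 1 hij (by decide)
      BEQ01 BEQ01_orth BEQ01_det BEQ01_diag BEQ01_S0 BEQ01_S1
  · exact BE_key mlog hmlog σh hmono hiso lam hlam 0 2 hij (by decide)
      BEQ02 BEQ02_orth BEQ02_det BEQ02_diag BEQ02_S0 BEQ02_S2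
  · exact BE_key mlog hmlog σh hmono hiso lam hlam 1 0 hij (by decide)
      BEQ01 BEQ01_orth BEQ01_det
      (fun μ => by rw [Equiv.swap_comm]; exact BEQ01_diag μ) BEQ01_S1 BEQ01_S0
  · exact absurd rfl hne
  · exact BE_key mlog hmlog σh hmono hiso lam hlam 1 2 hij (by decide)
      BEQ12 BEQ12_orth BEQ12_det BEQ12_diag BEQ12_S1 BEQ12_S2
  · exact BE_key mlog hmlog σh hmono hiso lam hlam 2 0 hij (by decide)
      BEQ02 BEQ02_orth BEQ02_det
      (fun μ => by rw [Equiv.swap_comm]; exact BEQ02_diag μ) BEQ02_S2 BEQ02_S0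
  · exact BE_key mlog hmlog σh hmono hiso lam hlam 2 1 hij (by decide)
      BEQ12 BEQ12_orth BEQ12_det
      (fun μ => by rw [Equiv.swap_comm]; exact BEQ12_diag μ) BEQ12_S2 BEQ12_S1
  · exact absurd rfl hne
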